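/- Equality of the two isoperimetric profiles at infinity: Let (X, d, μ) be a noncompact metric measure space satisfying the cut property. Then Ĩ^∞_X(V) = I^∞_X(V) for every V ∈ (0, μ(X)). -/

import Mathlib

open Filter MeasureTheory Metric Set Topology
open scoped ENNReal NNReal

noncomputable section

variable {X : Type*} [MetricSpace X] [MeasurableSpace X]

/-- `u` is locally Lipschitz on the set `A`. -/
def LocLipschitzOn (u : X → ℝ) (A : Set X) : Prop :=
  ∀ x ∈ A, ∃ K : NNReal, ∃ t ∈ 𝓝[A] x, LipschitzOnWith K u t

/-- The slope `lip u (x)` of `u` at `x` (equal to `0` at isolated points). -/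
def lipSlope (u : X → ℝ) (x : X) : ℝ≥0∞ :=
  Filter.limsup (fun y => ENNReal.ofReal (|u y - u x| / dist y x)) (𝓝[≠] x)

/-- Convergence `u i → f` in `L¹(B, μ)`. -/
def TendstoL1On (μ : Measure X) (B : Set X) (u : ℕ → X → ℝ) (f : X → ℝ) : Prop :=
  Tendsto (fun i => ∫⁻ x in B, ENNReal.ofReal |u i x - f x| ∂μ) atTop (𝓝 0)

/-- Convergence `u i → f` in `L¹_loc(A, μ)`, i.e. in `L¹(K, μ)` for every compact `K ⊆ A`. -/
def TendstoL1LocOn (μ : Measure X) (A : Set X) (u : ℕ → X → ℝ) (f : X → ℝ) : Prop :=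
  ∀ K : Set X, K ⊆ A → IsCompact K → TendstoL1On μ K u f

/-- The relative perimeter `P(E, A)` of a Borel set `E` in an open set `A`. -/
def perim (μ : Measure X) (E A : Set X) : ℝ≥0∞ :=
  ⨅ (u : ℕ → X → ℝ) (_ : ∀ i, LocLipschitzOn (u i) A)
    (_ : TendstoL1LocOn μ A u (E.indicator 1)),
    Filter.liminf (fun i => ∫⁻ x in A, lipSlope (u i) x ∂μ) atTop

/-- The perimeter `P(E) := P(E, X)`. -/
def Perim (μ : Measure X) (E : Set X) : ℝ≥0∞ := perim μ E Set.univ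

/-- The isoperimetric profile `I_X`. -/
def isoProfile (μ : Measure X) (V : ℝ) : ℝ≥0∞ :=
  ⨅ (E : Set X) (_ : MeasurableSet E) (_ : μ E = ENNReal.ofReal V), Perim μ E

/-- The measure is finite on bounded sets. -/
def FiniteOnBounded (μ : Measure X) : Prop :=
  ∀ s : Set X, Bornology.IsBounded s → μ s < ⊤

/-- The support of the measure is the whole space. -/
def FullSupport (μ : Measure X) : Prop :=
  ∀ (x : X) (r : ℝ), 0 < r → 0 < μ (ball x r)

/-- (H1) BV compactness. -/
def BVCompactness (μ : Measure X) : Prop :=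
  ∀ E : ℕ → Set X, (∀ i, MeasurableSet (E i)) →
    (∃ M : ℝ≥0∞, M ≠ ⊤ ∧ ∀ i, μ (E i) + Perim μ (E i) ≤ M) →
    ∃ φ : ℕ → ℕ, StrictMono φ ∧ ∃ F : Set X, MeasurableSet F ∧
      ∀ (x : X) (r : ℝ), 0 < r →
        TendstoL1On μ (ball x r) (fun k => (E (φ k)).indicator 1) (F.indicator 1)

/-- (H2) Cut property. -/
def CutProperty (μ : Measure X) : Prop :=
  ∀ E : Set X, MeasurableSet E → Perim μ E ≠ ⊤ → ∀ o : X,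
    ∀ᵐ r ∂(volume.restrict (Set.Ioi (0:ℝ))),
      Perim μ (E ∩ ball o r) ≤ perim μ E (ball o r) +
          ENNReal.ofReal (deriv (fun s => (μ (E ∩ ball o s)).toReal) r) ∧
      Perim μ (E \ ball o r) ≤ perim μ E (closure (ball o r))ᶜ +
          ENNReal.ofReal (deriv (fun s => (μ (E ∩ ball o s)).toReal) r)

/-- (H3) The perimeter of balls of radius `r` vanishes uniformly as `r → 0⁺`. -/
def SmallBallPerimeter (μ : Measure X) : Prop :=
  Tendsto (fun r : ℝ => ⨆ x : X, Perim μ (ball x r)) (𝓝[>] 0) (𝓝 0)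

/-- (H4) Continuity of the volume of balls. -/
def BallVolContinuous (μ : Measure X) : Prop :=
  ∀ x : X, ContinuousOn (fun r : ℝ => (μ (ball x r)).toReal) (Set.Ioi (0:ℝ))

/-- (H5) `μ` is uniformly locally doubling. -/
def UnifLocDoubling (μ : Measure X) : Prop :=
  ∀ R : ℝ, 0 < R → ∃ C : ℝ≥0∞, C ≠ ⊤ ∧
    ∀ (x : X) (r : ℝ), 0 < r → r ≤ R → μ (ball x (2*r)) ≤ C * μ (ball x r)

/-- The isoperimetric profile at infinity `I^∞_X`. -/
def isoProfileAtInfty (μ : Measure X) (V : ℝ) : ℝ≥0∞ :=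
  ⨅ (E : ℕ → Set X) (_ : ∀ i, MeasurableSet (E i))
    (_ : Tendsto (fun i => μ (E i)) atTop (𝓝 (ENNReal.ofReal V)))
    (_ : ∀ (x : X) (r : ℝ), 0 < r → ∀ᶠ i in atTop, E i ∩ ball x r = ∅),
    Filter.liminf (fun i => Perim μ (E i)) atTop

/-- The isoperimetric profile at infinity volumewise `Ĩ^∞_X`. -/
def isoProfileAtInftyVol (μ : Measure X) (V : ℝ) : ℝ≥0∞ :=
  ⨅ (E : ℕ → Set X) (_ : ∀ i, MeasurableSet (E i))
    (_ : Tendsto (fun i => μ (E i)) atTop (𝓝 (ENNReal.ofReal V)))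
    (_ : ∀ (x : X) (r : ℝ), 0 < r →
      Tendsto (fun i => μ (E i ∩ ball x r)) atTop (𝓝 0)),
    Filter.liminf (fun i => Perim μ (E i)) atTop

/-- The open interval `(0, μ(X))` of admissible volumes. -/
def profileDomain (μ : Measure X) : Set ℝ :=
  {V : ℝ | 0 < V ∧ ENNReal.ofReal V < μ Set.univ}

/-- Auxiliary: on any unit window to the right of `a ≥ 0`, if a monotone function increases by at
most `ε`, we can find a radius where an a.e. property holds and the derivative is at most `4ε`. -/
lemma exists_good_radius {f : ℝ → ℝ} (hf : Monotone f) {a ε : ℝ} (ha : 0 ≤ a) (hε : 0 < ε)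
    (hinc : f (a + 1) - f a ≤ ε) {Q : ℝ → Prop}
    (hQ : ∀ᵐ r ∂(volume.restrict (Set.Ioi (0:ℝ))), Q r) :
    ∃ r, a < r ∧ r < a + 1 ∧ Q r ∧
      ENNReal.ofReal (deriv f r) ≤ ENNReal.ofReal (4 * ε) := by
  classical
  set ν := hf.stieltjesFunction.measure with hν
  have hD : ∀ᵐ r, deriv f r = (ν.rnDeriv volume r).toReal := by
    filter_upwards [hf.ae_hasDerivAt] with r hr using hr.deriv
  set W : Set ℝ := Ioo a (a + 1/2) with hW
  have hWvol : volume W = ENNReal.ofReal (1/2) := by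
    rw [hW, Real.volume_Ioo]; norm_num
  set Bad : Set ℝ := {r | ENNReal.ofReal (4 * ε) < ν.rnDeriv volume r} with hBad
  have hBadVol : volume (W ∩ Bad) ≤ ENNReal.ofReal (1/4) := by
    have h1 : ENNReal.ofReal (4 * ε) * volume (W ∩ Bad)
        ≤ ∫⁻ r in W ∩ Bad, ν.rnDeriv volume r ∂volume := by
      rw [← setLIntegral_const]
      exact setLIntegral_mono (ν.measurable_rnDeriv volume) fun r hr => (hr.2 : _).le
    have h2 : (∫⁻ r in W ∩ Bad, ν.rnDeriv volume r ∂volume) ≤ ν (Ioc a (a + 1/2)) :=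
      le_trans (Measure.setLIntegral_rnDeriv_le _) (measure_mono (by
        intro r hr; exact ⟨hr.1.1, hr.1.2.le⟩))
    have h3 : ν (Ioc a (a + 1/2)) ≤ ENNReal.ofReal ε := by
      rw [hν, StieltjesFunction.measure_Ioc]
      apply ENNReal.ofReal_le_ofReal
      have e1 : hf.stieltjesFunction (a + 1/2) ≤ f (a + 1) := by
        rw [hf.stieltjesFunction_eq]
        exact hf.rightLim_le (by linarith)
      have e2 : f a ≤ hf.stieltjesFunction a := by
        rw [hf.stieltjesFunction_eq]
        exact hf.le_rightLim le_rfl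
      linarith
    have h4 : ENNReal.ofReal (4 * ε) * volume (W ∩ Bad) ≤ ENNReal.ofReal ε :=
      le_trans h1 (le_trans h2 h3)
    have h5 : volume (W ∩ Bad) ≤ ENNReal.ofReal ε / ENNReal.ofReal (4 * ε) := by
      rw [ENNReal.le_div_iff_mul_le (Or.inl (by positivity)) (Or.inl ENNReal.ofReal_ne_top)]
      rwa [mul_comm]
    refine h5.trans ?_
    rw [← ENNReal.ofReal_div_of_pos (by positivity)]
    apply ENNReal.ofReal_le_ofReal
    rw [div_le_iff₀ (by positivity)]; ring_nf; nlinarith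
  by_contra hcon
  push_neg at hcon
  have hQ' : volume ({r | ¬ Q r} ∩ Ioi (0:ℝ)) = 0 := by
    have := ae_iff.1 hQ
    rwa [Measure.restrict_apply' measurableSet_Ioi] at this
  have hDset : volume {r | ¬ (deriv f r = (ν.rnDeriv volume r).toReal)} = 0 := ae_iff.1 hD
  have hsub : W ⊆ ({r | ¬ Q r} ∩ Ioi (0:ℝ)) ∪
      {r | ¬ (deriv f r = (ν.rnDeriv volume r).toReal)} ∪ (W ∩ Bad) := by
    intro r hr
    by_cases hq : Q r
    · by_cases hd : deriv f r = (ν.rnDeriv volume r).toReal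
      · right
        refine ⟨hr, ?_⟩
        have h : ENNReal.ofReal (4 * ε) < ENNReal.ofReal (deriv f r) :=
          hcon r hr.1 (by have := hr.2; simp only [hW, mem_Ioo] at hr; linarith) hq
        calc ENNReal.ofReal (4 * ε) < ENNReal.ofReal ((ν.rnDeriv volume r).toReal) := by
              rwa [hd] at h
          _ ≤ ν.rnDeriv volume r := ENNReal.ofReal_toReal_le
      · left; right; exact hd
    · left; left; exact ⟨hq, lt_of_le_of_lt ha hr.1⟩
  have hfinal : volume W ≤ ENNReal.ofReal (1/4) := by
    calc volume W ≤ volume (({r | ¬ Q r} ∩ Ioi (0:ℝ)) ∪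
        {r | ¬ (deriv f r = (ν.rnDeriv volume r).toReal)} ∪ (W ∩ Bad)) := measure_mono hsub
      _ ≤ volume (({r | ¬ Q r} ∩ Ioi (0:ℝ)) ∪
          {r | ¬ (deriv f r = (ν.rnDeriv volume r).toReal)}) + volume (W ∩ Bad) :=
        measure_union_le _ _
      _ ≤ (volume ({r | ¬ Q r} ∩ Ioi (0:ℝ)) +
          volume {r | ¬ (deriv f r = (ν.rnDeriv volume r).toReal)}) + volume (W ∩ Bad) :=
        add_le_add_left (measure_union_le _ _) _
      _ ≤ ENNReal.ofReal (1/4) := by rw [hQ', hDset]; simpa using hBadVol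
  rw [hWvol] at hfinal
  have := (ENNReal.ofReal_le_ofReal_iff (by norm_num)).1 hfinal
  linarith

/-- Auxiliary: the relative perimeter in any open set is at most the total perimeter. -/
lemma perim_le_Perim (μ : Measure X) (E A : Set X) : perim μ E A ≤ Perim μ E := by
  refine le_iInf fun u => le_iInf fun h1 => le_iInf fun h2 => ?_
  refine iInf_le_of_le u (iInf_le_of_le ?_ (iInf_le_of_le ?_ ?_))
  · intro i x hx
    obtain ⟨K, t, ht, hl⟩ := h1 i x (mem_univ x)
    exact ⟨K, t, nhdsWithin_mono x (subset_univ A) ht, hl⟩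
  · intro K hK hKc
    exact h2 K (subset_univ K) hKc
  · refine liminf_le_liminf (Eventually.of_forall fun i => ?_)
    exact lintegral_mono' (Measure.restrict_mono (subset_univ A) le_rfl) le_rfl

/-- **Equality of the two isoperimetric profiles at infinity.**
Let `(X, d, μ)` be a noncompact metric measure space satisfying the cut property.
Then `Ĩ^∞_X(V) = I^∞_X(V)` for every `V ∈ (0, μ(X))`. -/
theorem isoProfileAtInftyVol_eq_isoProfileAtInfty
    {X : Type*} [MetricSpace X] [MeasurableSpace X] [BorelSpace X]
    [LocallyCompactSpace X] [TopologicalSpace.SeparableSpace X] [NoncompactSpace X]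
    (μ : Measure X) (hfin : FiniteOnBounded μ) (hsupp : FullSupport μ)
    (hcut : CutProperty μ)
    (V : ℝ) (hV : V ∈ profileDomain μ) :
    isoProfileAtInftyVol μ V = isoProfileAtInfty μ V := by
  classical
  refine le_antisymm ?_ ?_
  · -- volumewise profile ≤ profile: any admissible sequence for `I^∞` is admissible for `Ĩ^∞`
    refine le_iInf fun E => le_iInf fun hE => le_iInf fun hvol => le_iInf fun hemp => ?_
    refine iInf_le_of_le E (iInf_le_of_le hE (iInf_le_of_le hvol (iInf_le_of_le ?_ le_rfl)))
    intro x t ht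
    refine Tendsto.congr' ?_ (tendsto_const_nhds (x := (0:ℝ≥0∞)))
    filter_upwards [hemp x t ht] with i hi
    simp [hi]
  · -- profile ≤ volumewise profile: the hard direction
    refine le_iInf fun E => le_iInf fun hE => le_iInf fun hvol => le_iInf fun hloc => ?_
    obtain ⟨o⟩ : Nonempty X := by
      by_contra h
      rw [not_nonempty_iff] at h
      exact NoncompactSpace.noncompact_univ (X := X)
        (by rw [Set.univ_eq_empty_iff.2 h]; exact isCompact_empty)
    -- diagonal extraction of scales
    have hN : ∀ k : ℕ, ∃ N : ℕ, ∀ i ≥ N,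
        μ (E i ∩ ball o ((k:ℝ) + 2)) ≤ ENNReal.ofReal (1/(k+1)) := by
      intro k
      have h0 : (0:ℝ≥0∞) < ENNReal.ofReal (1/(k+1)) :=
        ENNReal.ofReal_pos.2 (by positivity)
      have hev := (hloc o ((k:ℝ) + 2) (by positivity)).eventually_lt_const h0
      obtain ⟨N, hN⟩ := eventually_atTop.1 (hev.mono fun i hi => hi.le)
      exact ⟨N, hN⟩
    choose N hN using hN
    set M : ℕ → ℕ := fun k => (Finset.range (k+1)).sup N + k with hM
    have hMk : ∀ k, k ≤ M k := fun k => Nat.le_add_left k _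
    have hMgood : ∀ k i, M k ≤ i →
        μ (E i ∩ ball o ((k:ℝ) + 2)) ≤ ENNReal.ofReal (1/(k+1)) := by
      intro k i hi
      refine hN k i ?_
      calc N k ≤ (Finset.range (k+1)).sup N := Finset.le_sup (by simp)
        _ ≤ M k := Nat.le_add_right _ _
        _ ≤ i := hi
    set κ : ℕ → ℕ := fun i => Nat.findGreatest (fun k => M k ≤ i) i with hκ
    have hκ1 : ∀ i, M 0 ≤ i → M (κ i) ≤ i := fun i hi =>
      Nat.findGreatest_spec (P := fun k => M k ≤ i) (Nat.zero_le i) hi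
    have hκ2 : ∀ k i, M k ≤ i → k ≤ κ i := fun k i hi =>
      Nat.le_findGreatest ((hMk k).trans hi) hi
    have hball_fin : ∀ (s : Set X) (x : X) (t : ℝ), μ (s ∩ ball x t) ≠ ⊤ := fun s x t =>
      (lt_of_le_of_lt (measure_mono inter_subset_right) (hfin _ isBounded_ball)).ne
    have hmono : ∀ i, Monotone (fun s : ℝ => (μ (E i ∩ ball o s)).toReal) := by
      intro i s t hst
      exact ENNReal.toReal_mono (hball_fin _ _ _)
        (measure_mono (inter_subset_inter_right _ (ball_subset_ball hst)))
    -- choice of cutting radii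
    have hchoice : ∀ i, ∃ r : ℝ, ((κ i : ℝ) + 1 < r ∧ r < (κ i : ℝ) + 2) ∧
        (M 0 ≤ i → Perim μ (E i \ ball o r) ≤
          Perim μ (E i) + ENNReal.ofReal (4 * (1/(κ i + 1)))) := by
      intro i
      by_cases hP : Perim μ (E i) = ⊤
      · refine ⟨(κ i : ℝ) + 1.5, ⟨by norm_num, by norm_num⟩, fun _ => ?_⟩
        rw [hP]
        simp
      · by_cases hi0 : M 0 ≤ i
        · have hcuti := hcut (E i) (hE i) hP o
          have hκpos : (0:ℝ) < (κ i : ℝ) + 1 := by positivity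
          have hinc : (fun s : ℝ => (μ (E i ∩ ball o s)).toReal) (((κ i : ℝ) + 1) + 1) -
              (fun s : ℝ => (μ (E i ∩ ball o s)).toReal) ((κ i : ℝ) + 1) ≤ 1/(κ i + 1) := by
            have h1 := hMgood (κ i) i (hκ1 i hi0)
            have h2 : (μ (E i ∩ ball o ((κ i : ℝ) + 2))).toReal ≤ 1/(κ i + 1) := by
              calc (μ (E i ∩ ball o ((κ i : ℝ) + 2))).toReal
                  ≤ (ENNReal.ofReal (1/(κ i + 1))).toReal :=
                    ENNReal.toReal_mono ENNReal.ofReal_ne_top h1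
                _ = 1/(κ i + 1) := ENNReal.toReal_ofReal (by positivity)
            have h3 : (0:ℝ) ≤ (μ (E i ∩ ball o ((κ i : ℝ) + 1))).toReal := ENNReal.toReal_nonneg
            have h4 : ((κ i : ℝ) + 1) + 1 = (κ i : ℝ) + 2 := by ring
            rw [h4]
            linarith
          obtain ⟨r, hr1, hr2, hQ, hd⟩ := exists_good_radius (hmono i)
            (a := (κ i : ℝ) + 1) (by positivity) (by positivity) hinc hcuti
          refine ⟨r, ⟨hr1, by linarith⟩, fun _ => ?_⟩
          calc Perim μ (E i \ ball o r) ≤ perim μ (E i) (closure (ball o r))ᶜ +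
                ENNReal.ofReal (deriv (fun s => (μ (E i ∩ ball o s)).toReal) r) := hQ.2
            _ ≤ Perim μ (E i) + ENNReal.ofReal (4 * (1/(κ i + 1))) :=
                add_le_add (perim_le_Perim μ (E i) _) hd
        · exact ⟨(κ i : ℝ) + 1.5, ⟨by norm_num, by norm_num⟩, fun h => absurd h hi0⟩
    choose r hr hperim using hchoice
    set F : ℕ → Set X := fun i => E i \ ball o (r i) with hF
    refine le_trans (iInf_le_of_le F (iInf_le_of_le ?_ (iInf_le_of_le ?_
      (iInf_le_of_le ?_ le_rfl)))) ?_
    · exact fun i => (hE i).diff measurableSet_ball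
    · -- volume convergence
      have key : Tendsto (fun i => μ (E i ∩ ball o (r i))) atTop (𝓝 0) := by
        rw [ENNReal.tendsto_nhds_zero]
        intro ε hε
        obtain ⟨k, hk⟩ : ∃ k : ℕ, ENNReal.ofReal (1/(k+1)) ≤ ε := by
          have h1 : Tendsto (fun k : ℕ => ENNReal.ofReal (1/(k+1))) atTop (𝓝 0) := by
            rw [← ENNReal.ofReal_zero]
            exact ENNReal.tendsto_ofReal (by
              simpa using (tendsto_one_div_add_atTop_nhds_zero_nat :
                Tendsto (fun n : ℕ => 1 / ((n : ℝ) + 1)) atTop (𝓝 0)))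
          obtain ⟨k, hk⟩ := eventually_atTop.1 (h1.eventually_lt_const hε)
          exact ⟨k, (hk k le_rfl).le⟩
        filter_upwards [eventually_ge_atTop (max (M 0) (M k))] with i hi
        have hik : k ≤ κ i := hκ2 k i (le_trans (le_max_right _ _) hi)
        have hi0 : M 0 ≤ i := le_trans (le_max_left _ _) hi
        calc μ (E i ∩ ball o (r i))
            ≤ μ (E i ∩ ball o ((κ i : ℝ) + 2)) :=
              measure_mono (inter_subset_inter_right _ (ball_subset_ball (hr i).2.le))
          _ ≤ ENNReal.ofReal (1/(κ i + 1)) := hMgood (κ i) i (hκ1 i hi0)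
          _ ≤ ENNReal.ofReal (1/(k+1)) := by
              apply ENNReal.ofReal_le_ofReal
              have : (k:ℝ) + 1 ≤ (κ i : ℝ) + 1 := by
                have := (Nat.cast_le (α := ℝ)).2 hik; linarith
              exact one_div_le_one_div_of_le (by positivity) this
          _ ≤ ε := hk
      have hrepr : ∀ i, μ (F i) = μ (E i) - μ (E i ∩ ball o (r i)) := by
        intro i
        have h := measure_diff (μ := μ) (s₁ := E i) (s₂ := E i ∩ ball o (r i))
          inter_subset_left ((hE i).inter measurableSet_ball).nullMeasurableSet
          (hball_fin _ _ _)
        rw [Set.diff_self_inter] at h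
        exact h
      have hsub := ENNReal.Tendsto.sub hvol key (Or.inr (by simp))
      rw [tsub_zero] at hsub
      exact hsub.congr fun i => (hrepr i).symm
    · -- eventually empty in each ball
      intro x t ht
      set k : ℕ := ⌈dist x o + t⌉₊ with hk
      filter_upwards [eventually_ge_atTop (M k)] with i hi
      have hik : k ≤ κ i := hκ2 k i hi
      have hball : ball x t ⊆ ball o (r i) := by
        intro y hy
        rw [mem_ball] at hy ⊢
        have h1 : dist y o ≤ dist y x + dist x o := dist_triangle y x o
        have h2 : dist x o + t ≤ (k : ℝ) := Nat.le_ceil _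
        have h3 : (k : ℝ) ≤ (κ i : ℝ) := Nat.cast_le.2 hik
        have h4 : (κ i : ℝ) + 1 < r i := (hr i).1
        calc dist y o < t + dist x o := by linarith
          _ ≤ (κ i : ℝ) := by linarith
          _ < r i := by linarith
      rw [eq_empty_iff_forall_notMem]
      rintro y ⟨⟨-, hy2⟩, hy3⟩
      exact hy2 (hball hy3)
    · -- liminf comparison
      set L := Filter.liminf (fun i => Perim μ (E i)) atTop with hL
      apply ENNReal.le_of_forall_pos_le_add
      intro δ hδ hLtop
      have hδ' : (0:ℝ≥0∞) < (δ : ℝ≥0∞) := ENNReal.coe_pos.2 hδ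
      have hev : ∀ᶠ i in atTop, Perim μ (F i) ≤ Perim μ (E i) + (δ : ℝ≥0∞) := by
        obtain ⟨k, hk⟩ : ∃ k : ℕ, ENNReal.ofReal (4 * (1/(k+1))) ≤ (δ : ℝ≥0∞) := by
          have h1 : Tendsto (fun k : ℕ => ENNReal.ofReal (4 * (1/(k+1)))) atTop (𝓝 0) := by
            rw [← ENNReal.ofReal_zero]
            apply ENNReal.tendsto_ofReal
            have := (tendsto_one_div_add_atTop_nhds_zero_nat :
              Tendsto (fun n : ℕ => 1 / ((n : ℝ) + 1)) atTop (𝓝 0))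
            simpa [mul_zero] using (this.const_mul (4:ℝ)).congr (fun k => by push_cast; ring_nf)
          obtain ⟨k, hk⟩ := eventually_atTop.1 (h1.eventually_lt_const hδ')
          exact ⟨k, (hk k le_rfl).le⟩
        filter_upwards [eventually_ge_atTop (max (M 0) (M k))] with i hi
        have hik : k ≤ κ i := hκ2 k i (le_trans (le_max_right _ _) hi)
        have hi0 : M 0 ≤ i := le_trans (le_max_left _ _) hi
        refine le_trans (hperim i hi0) (add_le_add_right ?_ _)
        refine le_trans ?_ hk
        apply ENNReal.ofReal_le_ofReal
        have h3 : (k:ℝ) + 1 ≤ (κ i : ℝ) + 1 := by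
          have := (Nat.cast_le (α := ℝ)).2 hik; linarith
        have := one_div_le_one_div_of_le (a := (k:ℝ)+1) (by positivity) h3
        linarith
      calc Filter.liminf (fun i => Perim μ (F i)) atTop
          ≤ Filter.liminf (fun i => Perim μ (E i) + (δ : ℝ≥0∞)) atTop := liminf_le_liminf hev
        _ = L + (δ : ℝ≥0∞) := by
            have hmono' : Monotone (fun x : ℝ≥0∞ => x + (δ : ℝ≥0∞)) :=
              fun a b hab => add_le_add_left hab _
            have hcont : ContinuousAt (fun x : ℝ≥0∞ => x + (δ : ℝ≥0∞)) L :=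
              (continuous_add_right _).continuousAt
            exact (hmono'.map_liminf_of_continuousAt (fun i => Perim μ (E i)) hcont).symm

end
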